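/- Let φ : ℝ^n → ℝ be convex and continuously differentiable. Then the range of the gradient of φ is almost convex: the interior of the convex hull of {∇φ(x) : x ∈ ℝ^n} is contained in {∇φ(x) : x ∈ ℝ^n}. -/

import Mathlib

open Set Filter Metric InnerProductSpace

local notation "⟪" x ", " y "⟫" => @inner ℝ _ _ x y

private lemma grad_ineq {n : ℕ} (φ : EuclideanSpace ℝ (Fin n) → ℝ)
    (hsmooth : ContDiff ℝ 1 φ) (hconv : ConvexOn ℝ Set.univ φ)
    (x z : EuclideanSpace ℝ (Fin n)) :
    φ x + ⟪gradient φ x, z - x⟫ ≤ φ z := by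
  have hgrad : HasGradientAt φ (gradient φ x) x :=
    ((hsmooth.differentiable one_ne_zero) x).hasGradientAt
  set c : ℝ →ᵃ[ℝ] EuclideanSpace ℝ (Fin n) := AffineMap.lineMap x z with hc
  have hgconv : ConvexOn ℝ Set.univ (φ ∘ c) := by
    simpa using hconv.comp_affineMap c
  have hcd : HasDerivAt (fun t : ℝ => c t) (z - x) 0 := by
    have : (fun t : ℝ => c t) = fun t : ℝ => t • (z - x) + x := by
      funext t; simp [hc, AffineMap.lineMap_apply]
    rw [this]
    simpa using ((hasDerivAt_id (0:ℝ)).smul_const (z - x)).add_const x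
  have hfd : HasFDerivAt φ (toDual ℝ _ (gradient φ x)) (c 0) := by
    rw [hc]; simpa using hgrad.hasFDerivAt
  have hcomp : HasDerivAt (φ ∘ c) ⟪gradient φ x, z - x⟫ 0 :=
    hfd.comp_hasDerivAt 0 hcd
  have hs := hgconv.le_slope_of_hasDerivAt (mem_univ (0:ℝ)) (mem_univ 1) zero_lt_one hcomp
  have h01 : slope (φ ∘ c) 0 1 = φ z - φ x := by
    simp only [slope, hc, Function.comp_apply, AffineMap.lineMap_apply_one,
      AffineMap.lineMap_apply_zero, sub_zero, inv_one, one_smul, smul_eq_mul, one_mul, vsub_eq_sub]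
  rw [h01] at hs
  linarith

/-- The range of the gradient of a continuously differentiable convex
function is almost convex: the interior of its convex hull is contained in it. -/
theorem gradient_range_almost_convex {n : ℕ}
    (φ : EuclideanSpace ℝ (Fin n) → ℝ)
    (hsmooth : ContDiff ℝ 1 φ) (hconv : ConvexOn ℝ Set.univ φ) :
    interior (convexHull ℝ (Set.range fun x => gradient φ x)) ⊆
      Set.range fun x => gradient φ x := by
  classical
  intro y hy
  obtain ⟨ε, hε, hball⟩ := Metric.isOpen_iff.1 isOpen_interior y hy
  -- For every unit vector u there is a gradient with large component in direction u
  have key : ∀ u : EuclideanSpace ℝ (Fin n), ‖u‖ = 1 → ∃ x, ε/4 < ⟪gradient φ x - y, u⟫ := by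
    intro u hu
    have hmem : y + (ε/2) • u ∈ convexHull ℝ (Set.range fun x => gradient φ x) := by
      apply interior_subset
      apply hball
      simp only [Metric.mem_ball, dist_eq_norm, add_sub_cancel_left, norm_smul,
        Real.norm_eq_abs, hu, mul_one, abs_of_pos (by linarith : (0:ℝ) < ε/2)]
      linarith
    have hlin : ConvexOn ℝ Set.univ (fun v => ⟪u, v⟫) :=
      ((innerSL ℝ u).toLinearMap).convexOn convex_univ
    obtain ⟨g, hg, hle⟩ := hlin.exists_ge_of_mem_convexHull (Set.subset_univ _) hmem
    obtain ⟨x, rfl⟩ := hg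
    refine ⟨x, ?_⟩
    have h1 : ⟪u, y + (ε/2) • u⟫ = ⟪u, y⟫ + ε/2 := by
      rw [inner_add_right, real_inner_smul_right, real_inner_self_eq_norm_sq, hu]
      ring
    have h2 : ⟪gradient φ x - y, u⟫ = ⟪u, gradient φ x⟫ - ⟪u, y⟫ := by
      rw [inner_sub_left, real_inner_comm (gradient φ x) u, real_inner_comm y u]
    rw [h1] at hle
    rw [h2]
    linarith
  -- finite subcover of the unit sphere
  have hopen : ∀ x : EuclideanSpace ℝ (Fin n),
      IsOpen {u : EuclideanSpace ℝ (Fin n) | ε/4 < ⟪gradient φ x - y, u⟫} := by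
    intro x
    exact isOpen_lt continuous_const ((continuous_const.inner continuous_id))
  have hcover : Metric.sphere (0 : EuclideanSpace ℝ (Fin n)) 1 ⊆
      ⋃ x : EuclideanSpace ℝ (Fin n), {u | ε/4 < ⟪gradient φ x - y, u⟫} := by
    intro u hu
    obtain ⟨x, hx⟩ := key u (by simpa using mem_sphere_zero_iff_norm.1 hu)
    exact Set.mem_iUnion.2 ⟨x, hx⟩
  obtain ⟨t, ht⟩ := (isCompact_sphere (0 : EuclideanSpace ℝ (Fin n)) 1).elim_finite_subcover
    _ hopen hcover
  set t' : Finset (EuclideanSpace ℝ (Fin n)) := insert 0 t with ht'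
  have ht'ne : t'.Nonempty := ⟨0, Finset.mem_insert_self 0 t⟩
  set C : ℝ := t'.inf' ht'ne (fun x => φ x - ⟪gradient φ x, x⟫) with hC
  set ψ : EuclideanSpace ℝ (Fin n) → ℝ := fun v => φ v - ⟪y, v⟫ with hψ
  -- lower bound: ψ v ≥ C + (ε/4) ‖v‖
  have hlow : ∀ v, C + ε/4 * ‖v‖ ≤ ψ v := by
    intro v
    have hgi : ∀ x, φ x - ⟪gradient φ x, x⟫ + ⟪gradient φ x - y, v⟫ ≤ ψ v := by
      intro x
      have := grad_ineq φ hsmooth hconv x v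
      have hexp : ⟪gradient φ x, v - x⟫ = ⟪gradient φ x, v⟫ - ⟪gradient φ x, x⟫ :=
        inner_sub_right _ _ _
      have hexp2 : ⟪gradient φ x - y, v⟫ = ⟪gradient φ x, v⟫ - ⟪y, v⟫ :=
        inner_sub_left _ _ _
      simp only [hψ]
      linarith
    by_cases hv : v = 0
    · subst hv
      obtain ⟨x, hxt, hxC⟩ := Finset.exists_mem_eq_inf' ht'ne
        (fun x => φ x - ⟪gradient φ x, x⟫)
      have := hgi x
      simp only [inner_zero_right, norm_zero, mul_zero, add_zero] at this ⊢
      rw [hC, hxC]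
      linarith
    · have hvn : (0:ℝ) < ‖v‖ := norm_pos_iff.2 hv
      set u : EuclideanSpace ℝ (Fin n) := ‖v‖⁻¹ • v with hu
      have hun : ‖u‖ = 1 := by
        rw [hu, norm_smul, norm_inv, norm_norm, inv_mul_cancel₀ hvn.ne']
      have humem : u ∈ ⋃ x ∈ t, {w | ε/4 < ⟪gradient φ x - y, w⟫} :=
        ht (mem_sphere_zero_iff_norm.2 hun)
      obtain ⟨x, hxt, hx⟩ := Set.mem_iUnion₂.1 humem
      rw [Set.mem_setOf_eq] at hx
      have hCx : C ≤ φ x - ⟪gradient φ x, x⟫ :=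
        Finset.inf'_le _ (Finset.mem_insert_of_mem hxt)
      have hvu : ⟪gradient φ x - y, v⟫ = ‖v‖ * ⟪gradient φ x - y, u⟫ := by
        rw [hu, real_inner_smul_right, ← mul_assoc, mul_inv_cancel₀ hvn.ne', one_mul]
      have h3 : ε/4 * ‖v‖ ≤ ⟪gradient φ x - y, v⟫ := by
        rw [hvu]
        calc ε/4 * ‖v‖ = ‖v‖ * (ε/4) := by ring
        _ ≤ ‖v‖ * ⟪gradient φ x - y, u⟫ :=
          mul_le_mul_of_nonneg_left hx.le hvn.le
      exact le_trans (add_le_add hCx h3) (hgi x)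
  -- ψ is coercive, hence attains a global minimum
  have hcoer : Tendsto ψ (cocompact (EuclideanSpace ℝ (Fin n))) atTop := by
    refine tendsto_atTop_mono hlow ?_
    exact tendsto_atTop_add_const_left _ C
      (tendsto_norm_cocompact_atTop.const_mul_atTop (by linarith))
  have hψc : Continuous ψ := by
    exact (hsmooth.continuous).sub (continuous_const.inner continuous_id)
  obtain ⟨x₀, hx₀⟩ := hψc.exists_forall_le hcoer
  -- at the minimum the gradient of ψ vanishes
  have hmin : IsLocalMin ψ x₀ := Filter.Eventually.of_forall hx₀
  have hfd : HasFDerivAt ψ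
      (toDual ℝ (EuclideanSpace ℝ (Fin n)) (gradient φ x₀)
        - toDual ℝ (EuclideanSpace ℝ (Fin n)) y) x₀ :=
    (((hsmooth.differentiable one_ne_zero) x₀).hasGradientAt.hasFDerivAt).sub
      ((toDual ℝ (EuclideanSpace ℝ (Fin n)) y).hasFDerivAt)
  have h0 := hmin.hasFDerivAt_eq_zero hfd
  refine ⟨x₀, ?_⟩
  have : toDual ℝ (EuclideanSpace ℝ (Fin n)) (gradient φ x₀)
      = toDual ℝ (EuclideanSpace ℝ (Fin n)) y := sub_eq_zero.1 h0
  exact (toDual ℝ (EuclideanSpace ℝ (Fin n))).injective this
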